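/- Let V ⊂ gl₃(ℂ) be a 2-dimensional subspace all of whose nonzero elements have rank 2, and define K(V) ⊂ ℙ² to be the set of kernels of the nonzero elements of V (each kernel is a line in ℂ³, hence a point of ℙ²). For the three model pencils: K(V_l) is the line V(x), K(V_c) is the smooth conic V(x²−yz), and K(V_p) is the single point V(x,y). In particular the GL₃(ℂ)×GL₃(ℂ)-orbits of V_l, V_c, V_p are pairwise distinct. -/

import Mathlib

open Matrix

noncomputable def matF : Matrix (Fin 3) (Fin 3) ℂ := !![0,1,0; 1,0,0; 0,0,0]
noncomputable def matG : Matrix (Fin 3) (Fin 3) ℂ := !![0,0,1; 0,0,0; 1,0,0]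
noncomputable def matH : Matrix (Fin 3) (Fin 3) ℂ := !![1,0,0; 0,0,1; 0,0,0]

noncomputable def pencilVl : Submodule ℂ (Matrix (Fin 3) (Fin 3) ℂ) :=
  Submodule.span ℂ {matF, matG}
noncomputable def pencilVc : Submodule ℂ (Matrix (Fin 3) (Fin 3) ℂ) :=
  Submodule.span ℂ {matF, matH}
noncomputable def pencilVp : Submodule ℂ (Matrix (Fin 3) (Fin 3) ℂ) :=
  Submodule.span ℂ {matFᵀ, matHᵀ}

def pencilEquiv (V W : Submodule ℂ (Matrix (Fin 3) (Fin 3) ℂ)) : Prop :=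
  ∃ M N : Matrix (Fin 3) (Fin 3) ℂ, IsUnit M ∧ IsUnit N ∧
    W = V.map ((LinearMap.mulLeft ℂ M).comp (LinearMap.mulRight ℂ N))

/-- The set `K(V) ⊂ ℙ²` of kernels of the nonzero elements of a pencil `V`, each kernel
being a line in `ℂ³` (i.e. a point of `ℙ²`), recorded as a set of submodules of `ℂ³`. -/
def kerSet (V : Submodule ℂ (Matrix (Fin 3) (Fin 3) ℂ)) : Set (Submodule ℂ (Fin 3 → ℂ)) :=
  {L | ∃ A ∈ V, A ≠ 0 ∧ L = LinearMap.ker A.mulVecLin}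

/- ## Auxiliary lemmas -/

lemma matF_t : matFᵀ = matF := by
  funext i j; fin_cases i <;> fin_cases j <;>
    simp [matF, Matrix.transpose_apply, Matrix.vecHead, Matrix.vecTail]

lemma matH_t : matHᵀ = !![1,0,0; 0,0,0; 0,1,0] := by
  funext i j; fin_cases i <;> fin_cases j <;>
    simp [matH, Matrix.transpose_apply, Matrix.vecHead, Matrix.vecTail]

lemma mulVec_l (a b : ℂ) (w : Fin 3 → ℂ) :
    (a • matF + b • matG).mulVec w = ![a * w 1 + b * w 2, a * w 0, b * w 0] := by
  funext i; fin_cases i <;>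
    simp [matF, matG, Matrix.mulVec, dotProduct, Fin.sum_univ_three,
      Matrix.vecHead, Matrix.vecTail] <;> ring

lemma mulVec_c (a b : ℂ) (w : Fin 3 → ℂ) :
    (a • matF + b • matH).mulVec w = ![b * w 0 + a * w 1, a * w 0 + b * w 2, 0] := by
  funext i; fin_cases i <;>
    simp [matF, matH, Matrix.mulVec, dotProduct, Fin.sum_univ_three,
      Matrix.vecHead, Matrix.vecTail] <;> ring

lemma mulVec_p (a b : ℂ) (w : Fin 3 → ℂ) :
    (a • matFᵀ + b • matHᵀ).mulVec w = ![b * w 0 + a * w 1, a * w 0, b * w 1] := by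
  rw [matF_t, matH_t]
  funext i; fin_cases i <;>
    simp [matF, Matrix.mulVec, dotProduct, Fin.sum_univ_three,
      Matrix.vecHead, Matrix.vecTail] <;> ring

lemma coeff_l {a b : ℂ} (h : a • matF + b • matG = 0) : a = 0 ∧ b = 0 := by
  constructor
  · have := congrFun (congrFun h 0) 1
    simpa [matF, matG, Matrix.vecHead, Matrix.vecTail] using this
  · have := congrFun (congrFun h 0) 2
    simpa [matF, matG, Matrix.vecHead, Matrix.vecTail] using this

lemma coeff_c {a b : ℂ} (h : a • matF + b • matH = 0) : a = 0 ∧ b = 0 := by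
  constructor
  · have := congrFun (congrFun h 0) 1
    simpa [matF, matH, Matrix.vecHead, Matrix.vecTail] using this
  · have := congrFun (congrFun h 0) 0
    simpa [matF, matH, Matrix.vecHead, Matrix.vecTail] using this

lemma coeff_p {a b : ℂ} (h : a • matFᵀ + b • matHᵀ = 0) : a = 0 ∧ b = 0 := by
  rw [matF_t, matH_t] at h
  constructor
  · have := congrFun (congrFun h 0) 1
    simpa [matF, Matrix.vecHead, Matrix.vecTail] using this
  · have := congrFun (congrFun h 0) 0
    simpa [matF, Matrix.vecHead, Matrix.vecTail] using this

lemma ker_l (a b : ℂ) (hab : ¬(a = 0 ∧ b = 0)) :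
    LinearMap.ker (a • matF + b • matG).mulVecLin = Submodule.span ℂ {![0, b, -a]} := by
  apply le_antisymm
  · intro w hw
    rw [LinearMap.mem_ker, Matrix.mulVecLin_apply, mulVec_l] at hw
    have h0 : a * w 1 + b * w 2 = 0 := by have := congrFun hw 0; simpa using this
    have h1 : a * w 0 = 0 := by have := congrFun hw 1; simpa using this
    have h2 : b * w 0 = 0 := by have := congrFun hw 2; simpa using this
    rw [Submodule.mem_span_singleton]
    by_cases ha : a = 0
    · have hb : b ≠ 0 := fun hb => hab ⟨ha, hb⟩
      have hw0 : w 0 = 0 := (mul_eq_zero.1 h2).resolve_left hb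
      have hbw2 : b * w 2 = 0 := by linear_combination h0 - w 1 * ha
      have hw2 : w 2 = 0 := (mul_eq_zero.1 hbw2).resolve_left hb
      refine ⟨w 1 / b, ?_⟩
      funext i; fin_cases i
      · show w 1 / b * 0 = w 0
        rw [hw0]; ring
      · show w 1 / b * b = w 1
        field_simp
      · show w 1 / b * (-a) = w 2
        rw [ha, hw2]; ring
    · have hw0 : w 0 = 0 := (mul_eq_zero.1 h1).resolve_left ha
      refine ⟨-(w 2) / a, ?_⟩
      funext i; fin_cases i
      · show -(w 2) / a * 0 = w 0
        rw [hw0]; ring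
      · show -(w 2) / a * b = w 1
        field_simp
        linear_combination -h0
      · show -(w 2) / a * (-a) = w 2
        field_simp
  · rw [Submodule.span_le, Set.singleton_subset_iff]
    rw [SetLike.mem_coe, LinearMap.mem_ker, Matrix.mulVecLin_apply, mulVec_l]
    funext i; fin_cases i <;>
      simp [Matrix.vecHead, Matrix.vecTail] <;> ring

lemma ker_c (a b : ℂ) (hab : ¬(a = 0 ∧ b = 0)) :
    LinearMap.ker (a • matF + b • matH).mulVecLin
      = Submodule.span ℂ {![a * b, -b ^ 2, -a ^ 2]} := by
  apply le_antisymm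
  · intro w hw
    rw [LinearMap.mem_ker, Matrix.mulVecLin_apply, mulVec_c] at hw
    have h0 : b * w 0 + a * w 1 = 0 := by have := congrFun hw 0; simpa using this
    have h1 : a * w 0 + b * w 2 = 0 := by have := congrFun hw 1; simpa using this
    rw [Submodule.mem_span_singleton]
    by_cases ha : a = 0
    · have hb : b ≠ 0 := fun hb => hab ⟨ha, hb⟩
      have hbw0 : b * w 0 = 0 := by linear_combination h0 - w 1 * ha
      have hw0 : w 0 = 0 := (mul_eq_zero.1 hbw0).resolve_left hb
      have hbw2 : b * w 2 = 0 := by linear_combination h1 - w 0 * ha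
      have hw2 : w 2 = 0 := (mul_eq_zero.1 hbw2).resolve_left hb
      refine ⟨-(w 1) / b ^ 2, ?_⟩
      funext i; fin_cases i
      · show -(w 1) / b ^ 2 * (a * b) = w 0
        rw [ha, hw0]; ring
      · show -(w 1) / b ^ 2 * (-b ^ 2) = w 1
        field_simp
      · show -(w 1) / b ^ 2 * (-a ^ 2) = w 2
        rw [ha, hw2]; ring
    · by_cases hb : b = 0
      · have haw1 : a * w 1 = 0 := by linear_combination h0 - w 0 * hb
        have hw1 : w 1 = 0 := (mul_eq_zero.1 haw1).resolve_left ha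
        have haw0 : a * w 0 = 0 := by linear_combination h1 - w 2 * hb
        have hw0 : w 0 = 0 := (mul_eq_zero.1 haw0).resolve_left ha
        refine ⟨-(w 2) / a ^ 2, ?_⟩
        funext i; fin_cases i
        · show -(w 2) / a ^ 2 * (a * b) = w 0
          rw [hb, hw0]; ring
        · show -(w 2) / a ^ 2 * (-b ^ 2) = w 1
          rw [hb, hw1]; ring
        · show -(w 2) / a ^ 2 * (-a ^ 2) = w 2
          field_simp
      · refine ⟨w 0 / (a * b), ?_⟩
        funext i; fin_cases i
        · show w 0 / (a * b) * (a * b) = w 0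
          field_simp
        · show w 0 / (a * b) * (-b ^ 2) = w 1
          rw [div_mul_eq_mul_div, div_eq_iff (mul_ne_zero ha hb)]
          linear_combination -b * h0
        · show w 0 / (a * b) * (-a ^ 2) = w 2
          rw [div_mul_eq_mul_div, div_eq_iff (mul_ne_zero ha hb)]
          linear_combination -a * h1
  · rw [Submodule.span_le, Set.singleton_subset_iff]
    rw [SetLike.mem_coe, LinearMap.mem_ker, Matrix.mulVecLin_apply, mulVec_c]
    funext i; fin_cases i <;>
      simp [Matrix.vecHead, Matrix.vecTail] <;> ring

lemma ker_p (a b : ℂ) (hab : ¬(a = 0 ∧ b = 0)) :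
    LinearMap.ker (a • matFᵀ + b • matHᵀ).mulVecLin
      = Submodule.span ℂ {![0, 0, 1]} := by
  apply le_antisymm
  · intro w hw
    rw [LinearMap.mem_ker, Matrix.mulVecLin_apply, mulVec_p] at hw
    have h0 : b * w 0 + a * w 1 = 0 := by have := congrFun hw 0; simpa using this
    have h1 : a * w 0 = 0 := by have := congrFun hw 1; simpa using this
    have h2 : b * w 1 = 0 := by have := congrFun hw 2; simpa using this
    have hw01 : w 0 = 0 ∧ w 1 = 0 := by
      by_cases ha : a = 0
      · have hb : b ≠ 0 := fun hb => hab ⟨ha, hb⟩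
        have hbw0 : b * w 0 = 0 := by linear_combination h0 - w 1 * ha
        exact ⟨(mul_eq_zero.1 hbw0).resolve_left hb, (mul_eq_zero.1 h2).resolve_left hb⟩
      · have hw0 : w 0 = 0 := (mul_eq_zero.1 h1).resolve_left ha
        have haw1 : a * w 1 = 0 := by linear_combination h0 - b * hw0
        exact ⟨hw0, (mul_eq_zero.1 haw1).resolve_left ha⟩
    rw [Submodule.mem_span_singleton]
    refine ⟨w 2, ?_⟩
    funext i; fin_cases i
    · show w 2 * 0 = w 0
      rw [hw01.1]; ring
    · show w 2 * 0 = w 1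
      rw [hw01.2]; ring
    · show w 2 * 1 = w 2
      ring
  · rw [Submodule.span_le, Set.singleton_subset_iff]
    rw [SetLike.mem_coe, LinearMap.mem_ker, Matrix.mulVecLin_apply, mulVec_p]
    funext i; fin_cases i <;>
      simp [Matrix.vecHead, Matrix.vecTail]

lemma span_smul_eq {c : ℂ} (hc : c ≠ 0) (v : Fin 3 → ℂ) :
    Submodule.span ℂ {c • v} = Submodule.span ℂ {v} :=
  Submodule.span_singleton_smul_eq (IsUnit.mk0 c hc) v

lemma kerSet_l :
    kerSet pencilVl
      = {L | ∃ v : Fin 3 → ℂ, v ≠ 0 ∧ v 0 = 0 ∧ L = Submodule.span ℂ {v}} := by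
  ext L
  constructor
  · rintro ⟨A, hA, hA0, rfl⟩
    unfold pencilVl at hA
    obtain ⟨a, b, rfl⟩ := Submodule.mem_span_pair.1 hA
    have hab : ¬(a = 0 ∧ b = 0) := fun ⟨h1, h2⟩ => hA0 (by simp [h1, h2])
    refine ⟨![0, b, -a], ?_, by simp, ker_l a b hab⟩
    intro h
    apply hab
    constructor
    · have := congrFun h 2
      simpa [Matrix.vecHead, Matrix.vecTail, neg_eq_zero] using this
    · have := congrFun h 1
      simpa [Matrix.vecHead, Matrix.vecTail] using this
  · rintro ⟨v, hv, hv0, rfl⟩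
    have hab : ¬(-(v 2) = 0 ∧ v 1 = 0) := by
      rintro ⟨h2, h1⟩
      rw [neg_eq_zero] at h2
      exact hv (by funext i; fin_cases i <;> simp [hv0, h1, h2])
    refine ⟨-(v 2) • matF + v 1 • matG, ?_, ?_, ?_⟩
    · unfold pencilVl
      exact Submodule.mem_span_pair.2 ⟨-(v 2), v 1, rfl⟩
    · intro h; exact hab (coeff_l h)
    · rw [ker_l _ _ hab]
      have hvv : ![(0 : ℂ), v 1, -(-(v 2))] = v := by
        funext i; fin_cases i <;> simp [hv0]
      rw [hvv]

lemma kerSet_c :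
    kerSet pencilVc
      = {L | ∃ v : Fin 3 → ℂ, v ≠ 0 ∧ v 0 ^ 2 - v 1 * v 2 = 0 ∧ L = Submodule.span ℂ {v}} := by
  ext L
  constructor
  · rintro ⟨A, hA, hA0, rfl⟩
    unfold pencilVc at hA
    obtain ⟨a, b, rfl⟩ := Submodule.mem_span_pair.1 hA
    have hab : ¬(a = 0 ∧ b = 0) := fun ⟨h1, h2⟩ => hA0 (by simp [h1, h2])
    refine ⟨![a * b, -b ^ 2, -a ^ 2], ?_, ?_, ker_c a b hab⟩
    · intro h
      apply hab
      constructor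
      · have := congrFun h 2
        simp [Matrix.vecHead, Matrix.vecTail, neg_eq_zero] at this
        exact this
      · have := congrFun h 1
        simp [Matrix.vecHead, Matrix.vecTail, neg_eq_zero] at this
        exact this
    · show (![a * b, -b ^ 2, -a ^ 2]) 0 ^ 2 - (![a * b, -b ^ 2, -a ^ 2]) 1
          * (![a * b, -b ^ 2, -a ^ 2]) 2 = 0
      simp [Matrix.vecHead, Matrix.vecTail]
      ring
  · rintro ⟨v, hv, hveq, rfl⟩
    by_cases h1 : v 1 = 0
    · have h0 : v 0 = 0 := by
        have hsq : v 0 ^ 2 = 0 := by linear_combination hveq + v 2 * h1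
        exact pow_eq_zero_iff (two_ne_zero) |>.1 hsq
      have h2 : v 2 ≠ 0 := by
        intro h2; exact hv (by funext i; fin_cases i <;> simp [h0, h1, h2])
      have hab : ¬((1 : ℂ) = 0 ∧ (0 : ℂ) = 0) := by norm_num
      refine ⟨(1 : ℂ) • matF + (0 : ℂ) • matH, ?_, ?_, ?_⟩
      · unfold pencilVc
        exact Submodule.mem_span_pair.2 ⟨1, 0, rfl⟩
      · intro h; exact hab (coeff_c h)
      · rw [ker_c _ _ hab]
        have key : ![(1 : ℂ) * 0, -(0 : ℂ) ^ 2, -(1 : ℂ) ^ 2] = (-(v 2)⁻¹) • v := by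
          funext i; fin_cases i
          · show (1 : ℂ) * 0 = -(v 2)⁻¹ * v 0
            rw [h0]; ring
          · show -(0 : ℂ) ^ 2 = -(v 2)⁻¹ * v 1
            rw [h1]; ring
          · show -(1 : ℂ) ^ 2 = -(v 2)⁻¹ * v 2
            field_simp
        rw [key, span_smul_eq (by simpa using h2)]
    · have hab : ¬(v 0 = 0 ∧ -(v 1) = 0) := by
        rintro ⟨-, hh⟩; rw [neg_eq_zero] at hh; exact h1 hh
      refine ⟨v 0 • matF + (-(v 1)) • matH, ?_, ?_, ?_⟩
      · unfold pencilVc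
        exact Submodule.mem_span_pair.2 ⟨v 0, -(v 1), rfl⟩
      · intro h; exact hab (coeff_c h)
      · rw [ker_c _ _ hab]
        have key : ![v 0 * -(v 1), -(-(v 1)) ^ 2, -(v 0) ^ 2] = (-(v 1)) • v := by
          funext i; fin_cases i
          · show v 0 * -(v 1) = -(v 1) * v 0
            ring
          · show -(-(v 1)) ^ 2 = -(v 1) * v 1
            ring
          · show -(v 0) ^ 2 = -(v 1) * v 2
            linear_combination -hveq
        rw [key, span_smul_eq (by simpa using h1)]

lemma kerSet_p :
    kerSet pencilVp = {Submodule.span ℂ {(![0,0,1] : Fin 3 → ℂ)}} := by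
  ext L
  constructor
  · rintro ⟨A, hA, hA0, rfl⟩
    unfold pencilVp at hA
    obtain ⟨a, b, rfl⟩ := Submodule.mem_span_pair.1 hA
    have hab : ¬(a = 0 ∧ b = 0) := fun ⟨h1, h2⟩ => hA0 (by simp [h1, h2])
    exact ker_p a b hab
  · rintro rfl
    have hab : ¬((1 : ℂ) = 0 ∧ (0 : ℂ) = 0) := by norm_num
    refine ⟨(1 : ℂ) • matFᵀ + (0 : ℂ) • matHᵀ, ?_, ?_, (ker_p 1 0 hab).symm⟩
    · unfold pencilVp
      exact Submodule.mem_span_pair.2 ⟨1, 0, rfl⟩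
    · intro h; exact hab (coeff_p h)

lemma MAN_ne_zero {M N A : Matrix (Fin 3) (Fin 3) ℂ} (hM : IsUnit M) (hN : IsUnit N)
    (hA : A ≠ 0) : M * (A * N) ≠ 0 := by
  intro h
  apply hA
  have hMd := (Matrix.isUnit_iff_isUnit_det M).1 hM
  have hNd := (Matrix.isUnit_iff_isUnit_det N).1 hN
  calc A = A * N * N⁻¹ := by rw [Matrix.mul_assoc, Matrix.mul_nonsing_inv N hNd, Matrix.mul_one]
    _ = M⁻¹ * (M * (A * N)) * N⁻¹ := by
        rw [← Matrix.mul_assoc M⁻¹, Matrix.nonsing_inv_mul M hMd, Matrix.one_mul]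
    _ = 0 := by rw [h, Matrix.mul_zero, Matrix.zero_mul]

lemma ker_MAN {M N A : Matrix (Fin 3) (Fin 3) ℂ} (hM : IsUnit M) :
    LinearMap.ker (M * (A * N)).mulVecLin
      = Submodule.comap N.mulVecLin (LinearMap.ker A.mulVecLin) := by
  have hMd := (Matrix.isUnit_iff_isUnit_det M).1 hM
  ext w
  simp only [LinearMap.mem_ker, Submodule.mem_comap, Matrix.mulVecLin_apply]
  rw [← Matrix.mulVec_mulVec, ← Matrix.mulVec_mulVec]
  constructor
  · intro h
    calc A.mulVec (N.mulVec w) = (M⁻¹ * M).mulVec (A.mulVec (N.mulVec w)) := by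
          rw [Matrix.nonsing_inv_mul M hMd, Matrix.one_mulVec]
      _ = M⁻¹.mulVec (M.mulVec (A.mulVec (N.mulVec w))) := by rw [← Matrix.mulVec_mulVec]
      _ = 0 := by rw [h, Matrix.mulVec_zero]
  · intro h; rw [h, Matrix.mulVec_zero]

lemma kerSet_map {V : Submodule ℂ (Matrix (Fin 3) (Fin 3) ℂ)} {M N : Matrix (Fin 3) (Fin 3) ℂ}
    (hM : IsUnit M) (hN : IsUnit N) :
    kerSet (V.map ((LinearMap.mulLeft ℂ M).comp (LinearMap.mulRight ℂ N)))
      = (fun L => Submodule.comap N.mulVecLin L) '' kerSet V := by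
  ext L
  constructor
  · rintro ⟨B, hB, hB0, rfl⟩
    obtain ⟨A, hA, rfl⟩ := Submodule.mem_map.1 hB
    have hfA : ((LinearMap.mulLeft ℂ M).comp (LinearMap.mulRight ℂ N)) A = M * (A * N) := by
      simp only [LinearMap.comp_apply, LinearMap.mulLeft_apply, LinearMap.mulRight_apply]
    rw [hfA] at hB0 ⊢
    have hA0 : A ≠ 0 := by rintro rfl; exact hB0 (by simp)
    exact ⟨LinearMap.ker A.mulVecLin, ⟨A, hA, hA0, rfl⟩, (ker_MAN hM).symm⟩
  · rintro ⟨L', ⟨A, hA, hA0, rfl⟩, rfl⟩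
    refine ⟨M * (A * N), ?_, MAN_ne_zero hM hN hA0, (ker_MAN hM).symm⟩
    exact Submodule.mem_map.2 ⟨A, hA, by
      simp only [LinearMap.comp_apply, LinearMap.mulLeft_apply, LinearMap.mulRight_apply]⟩

lemma comap_inj {N : Matrix (Fin 3) (Fin 3) ℂ} (hN : IsUnit N) :
    Function.Injective (fun L => Submodule.comap N.mulVecLin L :
      Submodule ℂ (Fin 3 → ℂ) → Submodule ℂ (Fin 3 → ℂ)) := by
  have hNd := (Matrix.isUnit_iff_isUnit_det N).1 hN
  have hsurj : Function.Surjective N.mulVecLin := fun y =>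
    ⟨N⁻¹.mulVec y, by
      rw [Matrix.mulVecLin_apply, Matrix.mulVec_mulVec, Matrix.mul_nonsing_inv N hNd,
        Matrix.one_mulVec]⟩
  exact Submodule.comap_injective_of_surjective hsurj

lemma e1_ne_span_e2 :
    Submodule.span ℂ {(![0,1,0] : Fin 3 → ℂ)} ≠ Submodule.span ℂ {(![0,0,1] : Fin 3 → ℂ)} := by
  intro h
  have h1 : (![0,1,0] : Fin 3 → ℂ) ∈ Submodule.span ℂ {(![0,0,1] : Fin 3 → ℂ)} :=
    h ▸ Submodule.mem_span_singleton_self _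
  obtain ⟨c, hc⟩ := Submodule.mem_span_singleton.1 h1
  have := congrFun hc 1
  simp [Matrix.vecHead, Matrix.vecTail] at this

lemma not_equiv_p {V : Submodule ℂ (Matrix (Fin 3) (Fin 3) ℂ)}
    (h1 : Submodule.span ℂ {(![0,1,0] : Fin 3 → ℂ)} ∈ kerSet V)
    (h2 : Submodule.span ℂ {(![0,0,1] : Fin 3 → ℂ)} ∈ kerSet V) :
    ¬ pencilEquiv V pencilVp := by
  rintro ⟨M, N, hM, hN, hmap⟩
  have hks : kerSet pencilVp = (fun L => Submodule.comap N.mulVecLin L) '' kerSet V := by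
    rw [hmap]; exact kerSet_map hM hN
  rw [kerSet_p] at hks
  have m1 : Submodule.comap N.mulVecLin (Submodule.span ℂ {(![0,1,0] : Fin 3 → ℂ)})
      ∈ ({Submodule.span ℂ {(![0,0,1] : Fin 3 → ℂ)}} : Set _) := by
    rw [hks]; exact ⟨_, h1, rfl⟩
  have m2 : Submodule.comap N.mulVecLin (Submodule.span ℂ {(![0,0,1] : Fin 3 → ℂ)})
      ∈ ({Submodule.span ℂ {(![0,0,1] : Fin 3 → ℂ)}} : Set _) := by
    rw [hks]; exact ⟨_, h2, rfl⟩
  rw [Set.mem_singleton_iff] at m1 m2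
  exact e1_ne_span_e2 (comap_inj hN (m1.trans m2.symm))

lemma mem_kerSet_c (u : Fin 3 → ℂ) (hu : u ≠ 0) (hq : u 0 ^ 2 - u 1 * u 2 = 0) :
    Submodule.span ℂ {u} ∈ kerSet pencilVc := by
  rw [kerSet_c]; exact ⟨u, hu, hq, rfl⟩

lemma ne_e1 : (![0,1,0] : Fin 3 → ℂ) ≠ 0 := by
  intro h; have := congrFun h 1; simp [Matrix.vecHead, Matrix.vecTail] at this

lemma ne_e2 : (![0,0,1] : Fin 3 → ℂ) ≠ 0 := by
  intro h; have := congrFun h 2; simp [Matrix.vecHead, Matrix.vecTail] at this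

lemma ne_u3 : (![1,-1,-1] : Fin 3 → ℂ) ≠ 0 := by
  intro h; have := congrFun h 0; simp [Matrix.vecHead, Matrix.vecTail] at this

theorem stmt_8 :
    kerSet pencilVl
      = {L | ∃ v : Fin 3 → ℂ, v ≠ 0 ∧ v 0 = 0 ∧ L = Submodule.span ℂ {v}} ∧
    kerSet pencilVc
      = {L | ∃ v : Fin 3 → ℂ, v ≠ 0 ∧ v 0 ^ 2 - v 1 * v 2 = 0 ∧ L = Submodule.span ℂ {v}} ∧
    kerSet pencilVp = {Submodule.span ℂ {(![0,0,1] : Fin 3 → ℂ)}} ∧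
    (¬ pencilEquiv pencilVl pencilVc ∧ ¬ pencilEquiv pencilVl pencilVp ∧
      ¬ pencilEquiv pencilVc pencilVp) := by
  refine ⟨kerSet_l, kerSet_c, kerSet_p, ?_, ?_, ?_⟩
  · -- ¬ pencilEquiv Vl Vc
    rintro ⟨M, N, hM, hN, hmap⟩
    have hks : kerSet pencilVc = (fun L => Submodule.comap N.mulVecLin L) '' kerSet pencilVl := by
      rw [hmap]; exact kerSet_map hM hN
    have key : ∀ u : Fin 3 → ℂ, Submodule.span ℂ {u} ∈ kerSet pencilVc →
        (N.mulVec u) 0 = 0 := by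
      intro u hu
      rw [hks] at hu
      obtain ⟨L', hL', hco⟩ := hu
      rw [kerSet_l] at hL'
      obtain ⟨v, hv, hv0, rfl⟩ := hL'
      have hmem : u ∈ (fun L => Submodule.comap N.mulVecLin L) (Submodule.span ℂ {v}) := by
        rw [hco]; exact Submodule.mem_span_singleton_self u
      simp only [Submodule.mem_comap, Matrix.mulVecLin_apply] at hmem
      obtain ⟨c, hc⟩ := Submodule.mem_span_singleton.1 hmem
      have h := congrFun hc 0
      simp only [Pi.smul_apply, smul_eq_mul, hv0, mul_zero] at h
      exact h.symm
    have expand : ∀ u : Fin 3 → ℂ,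
        (N.mulVec u) 0 = N 0 0 * u 0 + N 0 1 * u 1 + N 0 2 * u 2 := by
      intro u
      simp [Matrix.mulVec, dotProduct, Fin.sum_univ_three]
    have k1 := key ![0,1,0] (mem_kerSet_c _ ne_e1 (by norm_num [Matrix.vecHead, Matrix.vecTail, Matrix.cons_val_zero, Matrix.cons_val_one, Matrix.cons_val_two]))
    have k2 := key ![0,0,1] (mem_kerSet_c _ ne_e2 (by norm_num [Matrix.vecHead, Matrix.vecTail, Matrix.cons_val_zero, Matrix.cons_val_one, Matrix.cons_val_two]))
    have k3 := key ![1,-1,-1]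
      (mem_kerSet_c _ ne_u3 (by norm_num [Matrix.vecHead, Matrix.vecTail, Matrix.cons_val_zero, Matrix.cons_val_one, Matrix.cons_val_two]))
    rw [expand] at k1 k2 k3
    simp [Matrix.vecHead, Matrix.vecTail] at k1 k2 k3
    have hN00 : N 0 0 = 0 := by linear_combination k3 + k1 + k2
    have hdet : N.det = 0 := by
      rw [Matrix.det_fin_three, hN00, k1, k2]; ring
    have hu := (Matrix.isUnit_iff_isUnit_det N).1 hN
    rw [hdet] at hu
    simp at hu
  · -- ¬ pencilEquiv Vl Vp
    apply not_equiv_p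
    · rw [kerSet_l]
      exact ⟨![0,1,0], ne_e1, by simp, rfl⟩
    · rw [kerSet_l]
      exact ⟨![0,0,1], ne_e2, by simp, rfl⟩
  · -- ¬ pencilEquiv Vc Vp
    apply not_equiv_p
    · exact mem_kerSet_c _ ne_e1 (by norm_num [Matrix.vecHead, Matrix.vecTail, Matrix.cons_val_zero, Matrix.cons_val_one, Matrix.cons_val_two])
    · exact mem_kerSet_c _ ne_e2 (by norm_num [Matrix.vecHead, Matrix.vecTail, Matrix.cons_val_zero, Matrix.cons_val_one, Matrix.cons_val_two])
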